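/- For all complex-valued multiplicative characters A, B, B', C, C' of a finite field F_q with q elements and all x ∈ F_q, one has F₂(A;B,B';C,C';x,1) = (B'C')(-1)·₃F₂(A, B, AC̄'; C, AB'C̄' | x). -/

import Mathlib

open Finset

noncomputable instance {F : Type*} [Field F] [Fintype F] : Fintype (MulChar F ℂ) :=
  Fintype.ofFinite _

/-- Finite-field binomial coefficient `{A choose B} = B(-1) · J(A, B̄)`,
where `J(χ,λ) = ∑_u χ(u)·λ(1-u)` is the Jacobi sum. -/
noncomputable def binom {F : Type*} [Field F] [Fintype F] (A B : MulChar F ℂ) : ℂ :=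
  B (-1) * ∑ u : F, A u * B⁻¹ (1 - u)

/-- Finite-field Gauss hypergeometric series
`₂F₁(A,B;C|x) = ε(x)·(BC)(-1)·∑_y B(y)·(B̄C)(1-y)·Ā(1-xy)`. -/
noncomputable def gauss2F1 {F : Type*} [Field F] [Fintype F]
    (A B C : MulChar F ℂ) (x : F) : ℂ :=
  (1 : MulChar F ℂ) x * (B * C) (-1) *
    ∑ y : F, B y * (B⁻¹ * C) (1 - y) * A⁻¹ (1 - x * y)

/-- Finite-field `₃F₂` hypergeometric series. -/
noncomputable def hyper3F2 {F : Type*} [Field F] [Fintype F]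
    (A₀ A₁ A₂ B₁ B₂ : MulChar F ℂ) (x : F) : ℂ :=
  ((Fintype.card F : ℂ) - 1)⁻¹ *
    ∑ χ : MulChar F ℂ,
      binom (A₀ * χ) χ * binom (A₁ * χ) (B₁ * χ) * binom (A₂ * χ) (B₂ * χ) * χ x

/-- Finite-field Appell series
`F₂(A;B,B';C,C';x,y) = ε(xy)·(BB'CC')(-1)·∑_{u,v} B(u)B'(v)(B̄C)(1-u)(B̄'C')(1-v)·Ā(1-ux-vy)`. -/
noncomputable def appellF2 {F : Type*} [Field F] [Fintype F]
    (A B B' C C' : MulChar F ℂ) (x y : F) : ℂ :=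
  (1 : MulChar F ℂ) (x * y) * (B * B' * C * C') (-1) *
    ∑ u : F, ∑ v : F,
      B u * B' v * (B⁻¹ * C) (1 - u) * (B'⁻¹ * C') (1 - v) * A⁻¹ (1 - u * x - v * y)

open scoped Classical in
/-- `δ(x) = 1` if `x = 0`, and `0` otherwise. -/
noncomputable def deltaF {F : Type*} [Field F] (x : F) : ℂ :=
  if x = 0 then 1 else 0

open scoped Classical in
/-- `δ(χ) = 1` if `χ = ε` (the trivial character), and `0` otherwise. -/
noncomputable def deltaChar {F : Type*} [Field F] [Fintype F] (χ : MulChar F ℂ) : ℂ :=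
  if χ = 1 then 1 else 0


section Aux

open scoped Classical

variable {F : Type*} [Field F] [Fintype F]

set_option linter.unusedSectionVars false in
private lemma mulchar_zero (P : MulChar F ℂ) : P 0 = 0 :=
  P.map_nonunit not_isUnit_zero

set_option linter.unusedSectionVars false in
private lemma mulchar_ne_zero (P : MulChar F ℂ) {a : F} (ha : a ≠ 0) : P a ≠ 0 := by
  intro h
  have : P a * P a⁻¹ = 1 := by
    rw [← map_mul, mul_inv_cancel₀ ha, MulChar.map_one]
  rw [h, zero_mul] at this
  exact zero_ne_one this

set_option linter.unusedSectionVars false in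
private lemma mulchar_map_inv (P : MulChar F ℂ) (a : F) : P a⁻¹ = (P a)⁻¹ := by
  rw [← MulChar.inv_apply', MulChar.inv_apply_eq_inv']

set_option linter.unusedSectionVars false in
private lemma mulchar_sq_neg_one (P : MulChar F ℂ) : P (-1) * P (-1) = 1 := by
  rw [← map_mul, neg_one_mul, neg_neg, MulChar.map_one]

/-- Orthogonality: summing a fixed value over all multiplicative characters. -/
private lemma sum_chars (a : F) :
    ∑ χ : MulChar F ℂ, χ a = if a = 1 then ((Fintype.card F : ℂ) - 1) else 0 := by
  split_ifs with h
  · subst h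
    simp only [MulChar.map_one, Finset.sum_const, nsmul_eq_mul, mul_one, Finset.card_univ]
    have h1 : Fintype.card (MulChar F ℂ) = Fintype.card F - 1 := by
      have := MulChar.card_eq_card_units_of_hasEnoughRootsOfUnity F ℂ
      rwa [Nat.card_eq_fintype_card, Nat.card_eq_fintype_card, Fintype.card_units] at this
    rw [h1, Nat.cast_sub Fintype.card_pos, Nat.cast_one]
  · by_cases hu : IsUnit a
    · obtain ⟨ψ, hψ⟩ := MulChar.exists_apply_ne_one_of_hasEnoughRootsOfUnity F ℂ h
      have h0 : ψ a * ψ⁻¹ a = 1 := by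
        rw [← MulChar.mul_apply, mul_inv_cancel, MulChar.one_apply hu]
      have key : ∑ χ : MulChar F ℂ, χ a = ψ a * ∑ χ : MulChar F ℂ, χ a := by
        rw [Finset.mul_sum]
        refine Fintype.sum_equiv (Equiv.mulLeft ψ⁻¹) _ _ fun χ ↦ ?_
        simp only [Equiv.coe_mulLeft, MulChar.mul_apply, ← mul_assoc, h0, one_mul]
      have h2 : (1 - ψ a) * ∑ χ : MulChar F ℂ, χ a = 0 := by
        rw [sub_mul, one_mul, ← key, sub_self]
      rcases mul_eq_zero.mp h2 with h3 | h3
      · exact absurd (by linear_combination -h3) hψ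
      · exact h3
    · exact Finset.sum_eq_zero fun χ _ ↦ MulChar.map_nonunit χ hu

set_option linter.unusedSectionVars false in
/-- Symmetry of the Jacobi sum. -/
private lemma jacobi_comm (P Q : MulChar F ℂ) :
    ∑ u : F, P u * Q (1 - u) = ∑ u : F, Q u * P (1 - u) := by
  refine Finset.sum_nbij' (fun u ↦ 1 - u) (fun u ↦ 1 - u) (by simp) (by simp)
    (by intro u _; ring_nf) (by intro u _; ring_nf) ?_
  intro u _
  rw [sub_sub_cancel, mul_comm]

set_option linter.unusedSectionVars false in
/-- The substitution `u ↦ u/(u-1)` in a Jacobi sum. -/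
private lemma jacobi_twist (P Q : MulChar F ℂ) :
    ∑ u : F, P u * Q (1 - u) = P (-1) * ∑ u : F, P u * (P * Q)⁻¹ (1 - u) := by
  rw [Finset.mul_sum]
  have hL : ∑ u : F, P u * Q (1 - u) =
      ∑ u ∈ Finset.univ.filter (fun u : F ↦ u ≠ 0 ∧ u ≠ 1), P u * Q (1 - u) := by
    refine (Finset.sum_subset (Finset.filter_subset _ _) fun u _ hu ↦ ?_).symm
    simp only [Finset.mem_filter, Finset.mem_univ, true_and, not_and_or, not_not] at hu
    rcases hu with h | h
    · rw [h, mulchar_zero, zero_mul]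
    · rw [h, sub_self, mulchar_zero, mul_zero]
  have hR : ∑ u : F, P (-1) * (P u * (P * Q)⁻¹ (1 - u)) =
      ∑ u ∈ Finset.univ.filter (fun u : F ↦ u ≠ 0 ∧ u ≠ 1),
        P (-1) * (P u * (P * Q)⁻¹ (1 - u)) := by
    refine (Finset.sum_subset (Finset.filter_subset _ _) fun u _ hu ↦ ?_).symm
    simp only [Finset.mem_filter, Finset.mem_univ, true_and, not_and_or, not_not] at hu
    rcases hu with h | h
    · rw [h, mulchar_zero, zero_mul, mul_zero]
    · rw [h, sub_self, mulchar_zero, mul_zero, mul_zero]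
  rw [hL, hR]
  have hmem : ∀ u : F, u ≠ 0 ∧ u ≠ 1 → u * (u - 1)⁻¹ ≠ 0 ∧ u * (u - 1)⁻¹ ≠ 1 := by
    intro u hu
    have h1 : u - 1 ≠ 0 := sub_ne_zero.mpr hu.2
    refine ⟨mul_ne_zero hu.1 (inv_ne_zero h1), fun h ↦ ?_⟩
    rw [mul_inv_eq_iff_eq_mul₀ h1, one_mul] at h
    exact one_ne_zero (by linear_combination h : (1 : F) = 0)
  have hinv : ∀ u : F, u ≠ 0 ∧ u ≠ 1 → u * (u - 1)⁻¹ * (u * (u - 1)⁻¹ - 1)⁻¹ = u := by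
    intro u hu
    have h1 : u - 1 ≠ 0 := sub_ne_zero.mpr hu.2
    have h2 : u * (u - 1)⁻¹ - 1 = (u - 1)⁻¹ := by field_simp; ring
    rw [h2, inv_inv, mul_assoc, inv_mul_cancel₀ h1, mul_one]
  refine Finset.sum_nbij' (fun u ↦ u * (u - 1)⁻¹) (fun u ↦ u * (u - 1)⁻¹) ?_ ?_ ?_ ?_ ?_
  · intro u hu
    simp only [Finset.mem_filter, Finset.mem_univ, true_and] at hu ⊢
    exact hmem u hu
  · intro u hu
    simp only [Finset.mem_filter, Finset.mem_univ, true_and] at hu ⊢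
    exact hmem u hu
  · intro u hu
    simp only [Finset.mem_filter, Finset.mem_univ, true_and] at hu
    exact hinv u hu
  · intro u hu
    simp only [Finset.mem_filter, Finset.mem_univ, true_and] at hu
    exact hinv u hu
  · intro u hu
    simp only [Finset.mem_filter, Finset.mem_univ, true_and] at hu
    have h1 : u - 1 ≠ 0 := sub_ne_zero.mpr hu.2
    have h1' : (1 : F) - u ≠ 0 := fun h ↦ h1 (by linear_combination -h)
    have h2 : 1 - u * (u - 1)⁻¹ = ((1 : F) - u)⁻¹ := by field_simp; ring
    rw [h2]
    have h3 : P (u * (u - 1)⁻¹) = P u * (P (-1) * P (1 - u))⁻¹ := by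
      rw [map_mul, mulchar_map_inv, show u - 1 = -1 * (1 - u) by ring, map_mul]
    have h4 : (P * Q)⁻¹ ((1 - u)⁻¹) = P (1 - u) * Q (1 - u) := by
      rw [MulChar.inv_apply_eq_inv', mulchar_map_inv, inv_inv, MulChar.mul_apply]
    rw [h3, h4]
    have hp1 : P (-1) ≠ 0 := mulchar_ne_zero P (by norm_num)
    have hp2 : P (1 - u) ≠ 0 := mulchar_ne_zero P h1'
    field_simp

/-- Reflection for the second binomial factor. -/
private lemma binom_B (B C χ : MulChar F ℂ) :
    binom (B * χ) (C * χ) = (B * C) (-1) * ∑ u : F, (B * χ) u * (B⁻¹ * C) (1 - u) := by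
  unfold binom
  rw [jacobi_twist (B * χ) (C * χ)⁻¹]
  have h1 : (B * χ * (C * χ)⁻¹)⁻¹ = B⁻¹ * C := by
    simp [mul_inv, inv_inv, mul_comm, mul_left_comm, mul_assoc]
  rw [h1, ← mul_assoc, ← MulChar.mul_apply]
  have h2 : C * χ * (B * χ) = B * C * (χ * χ) := by
    simp [mul_comm, mul_left_comm, mul_assoc]
  rw [h2, MulChar.mul_apply, MulChar.mul_apply χ χ, mulchar_sq_neg_one, mul_one]

/-- Reflection for the third binomial factor. -/
private lemma binom_W (A B' C' χ : MulChar F ℂ) :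
    binom (A * C'⁻¹ * χ) (A * B' * C'⁻¹ * χ) =
      ∑ v : F, B' v * (A⁻¹ * B'⁻¹ * C' * χ⁻¹) (1 - v) := by
  unfold binom
  rw [jacobi_twist (A * C'⁻¹ * χ) (A * B' * C'⁻¹ * χ)⁻¹]
  have h1 : (A * C'⁻¹ * χ * (A * B' * C'⁻¹ * χ)⁻¹)⁻¹ = B' := by
    simp [mul_inv, inv_inv, mul_comm, mul_left_comm, mul_assoc]
  rw [h1, jacobi_comm (A * C'⁻¹ * χ) B', jacobi_twist B' (A * C'⁻¹ * χ)]
  have h2 : (B' * (A * C'⁻¹ * χ))⁻¹ = A⁻¹ * B'⁻¹ * C' * χ⁻¹ := by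
    simp [mul_inv, inv_inv, mul_comm, mul_left_comm, mul_assoc]
  rw [h2, ← mul_assoc, ← mul_assoc, ← MulChar.mul_apply, ← MulChar.mul_apply]
  have h3 : A * B' * C'⁻¹ * χ * (A * C'⁻¹ * χ) * B' =
      (A * B' * C'⁻¹ * χ) * (A * B' * C'⁻¹ * χ) := by
    simp [mul_comm, mul_left_comm, mul_assoc]
  rw [h3, MulChar.mul_apply, mulchar_sq_neg_one, one_mul]

/-- Finite-field binomial theorem: expanding `Ā(1-z)` as a character sum. -/
private lemma char_sum_binom (A : MulChar F ℂ) (z : F) :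
    ∑ χ : MulChar F ℂ, binom (A * χ) χ * χ z =
      ((Fintype.card F : ℂ) - 1) * (A⁻¹ (1 - z) - deltaF z) := by
  have step1 : ∑ χ : MulChar F ℂ, binom (A * χ) χ * χ z =
      ∑ u : F, A u * ∑ χ : MulChar F ℂ, χ (-1) * χ u * χ⁻¹ (1 - u) * χ z := by
    have e1 : ∀ χ : MulChar F ℂ, binom (A * χ) χ * χ z =
        ∑ u : F, A u * (χ (-1) * χ u * χ⁻¹ (1 - u) * χ z) := by
      intro χ
      unfold binom
      rw [Finset.mul_sum, Finset.sum_mul]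
      refine Finset.sum_congr rfl fun u _ ↦ ?_
      rw [MulChar.mul_apply]
      ring
    rw [Finset.sum_congr rfl fun χ _ ↦ e1 χ, Finset.sum_comm]
    exact Finset.sum_congr rfl fun u _ ↦ (Finset.mul_sum _ _ _).symm
  rw [step1]
  have hinner : ∀ u : F, ∑ χ : MulChar F ℂ, χ (-1) * χ u * χ⁻¹ (1 - u) * χ z =
      if u ≠ 1 ∧ -1 * u * (1 - u)⁻¹ * z = 1 then ((Fintype.card F : ℂ) - 1) else 0 := by
    intro u
    by_cases hu : u = 1
    · subst hu
      simp only [ne_eq, not_true_eq_false, false_and, if_false, sub_self]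
      refine Finset.sum_eq_zero fun χ _ ↦ ?_
      rw [mulchar_zero χ⁻¹]
      ring
    · have key : ∀ χ : MulChar F ℂ, χ (-1) * χ u * χ⁻¹ (1 - u) * χ z =
          χ (-1 * u * (1 - u)⁻¹ * z) := fun χ ↦ by
        rw [MulChar.inv_apply', ← map_mul, ← map_mul, ← map_mul]
      simp only [key, sum_chars, hu, ne_eq, not_false_eq_true, true_and]
  simp only [hinner]
  by_cases hz0 : z = 0
  · subst hz0
    rw [show deltaF (0 : F) = 1 from if_pos rfl, sub_zero, MulChar.map_one, sub_self, mul_zero]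
    refine Finset.sum_eq_zero fun u _ ↦ ?_
    rw [if_neg, mul_zero]
    rintro ⟨-, h⟩
    rw [mul_zero] at h
    exact zero_ne_one h
  · have hdz : deltaF z = 0 := if_neg hz0
    rw [hdz, sub_zero]
    by_cases hz1 : z = 1
    · subst hz1
      rw [sub_self, mulchar_zero, mul_zero]
      refine Finset.sum_eq_zero fun u _ ↦ ?_
      rw [if_neg, mul_zero]
      rintro ⟨hu, h⟩
      have h1u : (1 : F) - u ≠ 0 := sub_ne_zero.mpr fun h' ↦ hu h'.symm
      field_simp at h
      exact one_ne_zero (by linear_combination -h : (1 : F) = 0)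
    · have h1z : (1 : F) - z ≠ 0 := sub_ne_zero.mpr fun h' ↦ hz1 h'.symm
      rw [Finset.sum_eq_single ((1 - z)⁻¹ : F)]
      · have hc1 : ((1 : F) - z)⁻¹ ≠ 1 := by
          intro h
          rw [inv_eq_one] at h
          exact hz0 (by linear_combination -h : z = 0)
        have hc2 : -1 * ((1 : F) - z)⁻¹ * (1 - (1 - z)⁻¹)⁻¹ * z = 1 := by
          have hw : ((1 : F) - z) * (1 - z)⁻¹ = 1 := mul_inv_cancel₀ h1z
          have h2 : 1 - ((1 : F) - z)⁻¹ = -z * (1 - z)⁻¹ := by linear_combination -hw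
          rw [h2, mul_inv, inv_inv]
          field_simp
        rw [if_pos ⟨hc1, hc2⟩, mulchar_map_inv, MulChar.inv_apply_eq_inv', mul_comm]
      · intro u _ hne
        by_cases hu : u ≠ 1 ∧ -1 * u * (1 - u)⁻¹ * z = 1
        · exfalso
          obtain ⟨hu1, h⟩ := hu
          have h1u : (1 : F) - u ≠ 0 := sub_ne_zero.mpr fun h' ↦ hu1 h'.symm
          apply hne
          field_simp at h
          have huz : u * ((1 : F) - z) = 1 := by linear_combination h
          exact eq_inv_of_mul_eq_one_left huz
        · rw [if_neg hu, mul_zero]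
      · intro h
        exact absurd (Finset.mem_univ _) h

private lemma card_sub_one_ne_zero : ((Fintype.card F : ℂ) - 1) ≠ 0 := by
  intro h
  have h1 : (Fintype.card F : ℂ) = ((1 : ℕ) : ℂ) := by
    rw [Nat.cast_one]; linear_combination h
  exact (Fintype.one_lt_card (α := F)).ne' (Nat.cast_injective h1)

end Aux

/-- F₂ at `y = 1` reduces to a ₃F₂. -/
theorem appellF2_y_one {F : Type*} [Field F] [Fintype F]
    (A B B' C C' : MulChar F ℂ) (x : F) :
    appellF2 A B B' C C' x 1 =
      (B' * C') (-1) * hyper3F2 A B (A * C'⁻¹) C (A * B' * C'⁻¹) x := by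
  classical
  by_cases hx : x = 0
  · subst hx
    unfold appellF2 hyper3F2
    simp [mulchar_zero]
  · -- Step M2 : the inner character sum for fixed u v
    have M2 : ∀ u v : F,
        ∑ χ : MulChar F ℂ, ((B * χ) u * (B⁻¹ * C) (1 - u)) *
            (B' v * (A⁻¹ * B'⁻¹ * C' * χ⁻¹) (1 - v)) * (binom (A * χ) χ * χ x) =
          ((Fintype.card F : ℂ) - 1) * (B u * B' v * (B⁻¹ * C) (1 - u) *
            (B'⁻¹ * C') (1 - v) * A⁻¹ (1 - u * x - v)) := by
      intro u v
      have expand : ∀ χ : MulChar F ℂ,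
          ((B * χ) u * (B⁻¹ * C) (1 - u)) *
              (B' v * (A⁻¹ * B'⁻¹ * C' * χ⁻¹) (1 - v)) * (binom (A * χ) χ * χ x) =
            (B u * (B⁻¹ * C) (1 - u) * B' v * (A⁻¹ * B'⁻¹ * C') (1 - v)) *
              (binom (A * χ) χ * (χ u * χ⁻¹ (1 - v) * χ x)) := by
        intro χ
        rw [MulChar.mul_apply B χ, MulChar.mul_apply (A⁻¹ * B'⁻¹ * C') χ⁻¹]
        ring
      rw [Finset.sum_congr rfl fun χ _ ↦ expand χ, ← Finset.mul_sum]
      by_cases hv : v = 1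
      · subst hv
        rw [sub_self, mulchar_zero, mulchar_zero]
        ring
      by_cases hu : u = 0
      · subst hu
        rw [mulchar_zero]
        ring
      have h1v : (1 : F) - v ≠ 0 := sub_ne_zero.mpr fun h ↦ hv h.symm
      have fold : ∀ χ : MulChar F ℂ, χ u * χ⁻¹ (1 - v) * χ x = χ (u * (1 - v)⁻¹ * x) := by
        intro χ
        rw [MulChar.inv_apply', ← map_mul, ← map_mul]
      simp only [fold]
      rw [char_sum_binom]
      have hdz : deltaF (u * (1 - v)⁻¹ * x) = 0 := by
        rw [deltaF, if_neg]
        exact mul_ne_zero (mul_ne_zero hu (inv_ne_zero h1v)) hx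
      rw [hdz, sub_zero]
      have harg : (1 - v) * (1 - u * (1 - v)⁻¹ * x) = 1 - u * x - v := by
        field_simp
        ring
      have hsplit : (A⁻¹ * B'⁻¹ * C') (1 - v) * A⁻¹ (1 - u * (1 - v)⁻¹ * x) =
          (B'⁻¹ * C') (1 - v) * A⁻¹ (1 - u * x - v) := by
        rw [MulChar.mul_apply (A⁻¹ * B'⁻¹) C', MulChar.mul_apply A⁻¹ B'⁻¹,
          MulChar.mul_apply B'⁻¹ C', ← harg, map_mul]
        ring
      calc B u * (B⁻¹ * C) (1 - u) * B' v * (A⁻¹ * B'⁻¹ * C') (1 - v) *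
            (((Fintype.card F : ℂ) - 1) * A⁻¹ (1 - u * (1 - v)⁻¹ * x))
          = ((Fintype.card F : ℂ) - 1) * (B u * B' v * (B⁻¹ * C) (1 - u) *
              ((A⁻¹ * B'⁻¹ * C') (1 - v) * A⁻¹ (1 - u * (1 - v)⁻¹ * x))) := by ring
        _ = _ := by rw [hsplit]; ring
    -- Step M1 : expand the character sum into a double field sum
    have M1 : ∑ χ : MulChar F ℂ,
        binom (A * χ) χ * binom (B * χ) (C * χ) *
          binom (A * C'⁻¹ * χ) (A * B' * C'⁻¹ * χ) * χ x =
        (B * C) (-1) * ∑ u : F, ∑ v : F, ∑ χ : MulChar F ℂ,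
          ((B * χ) u * (B⁻¹ * C) (1 - u)) *
            (B' v * (A⁻¹ * B'⁻¹ * C' * χ⁻¹) (1 - v)) * (binom (A * χ) χ * χ x) := by
      have perχ : ∀ χ : MulChar F ℂ,
          binom (A * χ) χ * binom (B * χ) (C * χ) *
            binom (A * C'⁻¹ * χ) (A * B' * C'⁻¹ * χ) * χ x =
          (B * C) (-1) * ∑ u : F, ∑ v : F,
            ((B * χ) u * (B⁻¹ * C) (1 - u)) *
              (B' v * (A⁻¹ * B'⁻¹ * C' * χ⁻¹) (1 - v)) * (binom (A * χ) χ * χ x) := by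
        intro χ
        rw [binom_B, binom_W]
        rw [show binom (A * χ) χ *
            ((B * C) (-1) * ∑ u : F, (B * χ) u * (B⁻¹ * C) (1 - u)) *
            (∑ v : F, B' v * (A⁻¹ * B'⁻¹ * C' * χ⁻¹) (1 - v)) * χ x =
            (B * C) (-1) * ((∑ u : F, (B * χ) u * (B⁻¹ * C) (1 - u)) *
              (∑ v : F, B' v * (A⁻¹ * B'⁻¹ * C' * χ⁻¹) (1 - v)) *
              (binom (A * χ) χ * χ x)) from by ring]
        rw [Finset.sum_mul_sum, Finset.sum_mul]
        exact congrArg _ (Finset.sum_congr rfl fun u _ ↦ Finset.sum_mul _ _ _)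
      rw [Finset.sum_congr rfl fun χ _ ↦ perχ χ, ← Finset.mul_sum]
      congr 1
      rw [Finset.sum_comm]
      refine Finset.sum_congr rfl fun u _ ↦ Finset.sum_comm
    -- assemble
    unfold hyper3F2 appellF2
    rw [M1]
    simp only [M2]
    rw [show ∑ u : F, ∑ v : F, ((Fintype.card F : ℂ) - 1) *
        (B u * B' v * (B⁻¹ * C) (1 - u) * (B'⁻¹ * C') (1 - v) *
        A⁻¹ (1 - u * x - v)) = ((Fintype.card F : ℂ) - 1) *
        ∑ u : F, ∑ v : F, B u * B' v * (B⁻¹ * C) (1 - u) *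
        (B'⁻¹ * C') (1 - v) * A⁻¹ (1 - u * x - v) from by
      rw [Finset.mul_sum]
      exact Finset.sum_congr rfl fun u _ ↦ (Finset.mul_sum _ _ _).symm]
    have hone : (1 : MulChar F ℂ) (x * 1) = 1 := by
      rw [mul_one]
      exact MulChar.one_apply (isUnit_iff_ne_zero.mpr hx)
    rw [hone, one_mul]
    have hconst : (B * B' * C * C') (-1) = (B' * C') (-1) * ((B * C) (-1)) := by
      simp only [MulChar.mul_apply]
      ring
    rw [hconst]
    simp only [mul_one]
    generalize (∑ u : F, ∑ v : F, B u * B' v * (B⁻¹ * C) (1 - u) *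
        (B'⁻¹ * C') (1 - v) * A⁻¹ (1 - u * x - v)) = S
    have hq := inv_mul_cancel₀ (card_sub_one_ne_zero (F := F))
    linear_combination (-((B' * C') (-1) * (B * C) (-1) * S)) * hq
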